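/- For every M > 0 and β > 0 there exists a constant C > 0 (depending only on M and β) such that for all ε with 0 < ε < 1/(8β) and all r > 0 satisfying √ε · r ≤ M, one has K₀(√(2βε) · r)² ≤ C · (1 + |log r|)² · K₀(√(2βε(1 + r²)))². -/

import Mathlib

open MeasureTheory Filter Set Topology

/-- Macdonald function `K₀`, via its integral representation. -/
noncomputable def K0 (x : ℝ) : ℝ := ∫ t in Set.Ioi (0 : ℝ), Real.exp (-x * Real.cosh t)

lemma half_exp_le_cosh (t : ℝ) : Real.exp t / 2 ≤ Real.cosh t := by
  rw [Real.cosh_eq]; linarith [Real.exp_pos (-t)]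

lemma cosh_le_exp_of_nonneg {t : ℝ} (ht : 0 ≤ t) : Real.cosh t ≤ Real.exp t := by
  rw [Real.cosh_eq]
  have : Real.exp (-t) ≤ Real.exp t := Real.exp_le_exp.2 (by linarith)
  linarith

lemma self_le_cosh {t : ℝ} (ht : 0 ≤ t) : t ≤ Real.cosh t := by
  have h1 := half_exp_le_cosh t
  have h2 : 1 + t / 2 ≤ Real.exp (t / 2) := by linarith [Real.add_one_le_exp (t / 2)]
  have h3 : Real.exp (t / 2) * Real.exp (t / 2) = Real.exp t := by
    rw [← Real.exp_add]; ring_nf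
  nlinarith [Real.exp_pos (t / 2), sq_nonneg (1 - t / 2)]

lemma K0_integrableOn {x : ℝ} (hx : 0 < x) :
    IntegrableOn (fun t => Real.exp (-x * Real.cosh t)) (Set.Ioi (0 : ℝ)) := by
  apply Integrable.mono' (exp_neg_integrableOn_Ioi 0 hx)
  · exact (Real.continuous_exp.comp (continuous_const.mul Real.continuous_cosh)).aestronglyMeasurable
  · filter_upwards [ae_restrict_mem measurableSet_Ioi] with t ht
    rw [Real.norm_eq_abs, abs_of_pos (Real.exp_pos _)]
    exact Real.exp_le_exp.2 (by nlinarith [self_le_cosh (le_of_lt (mem_Ioi.1 ht))])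

lemma K0_nonneg {x : ℝ} : 0 ≤ K0 x :=
  setIntegral_nonneg measurableSet_Ioi fun t _ => (Real.exp_pos _).le

lemma K0_le {x : ℝ} (hx : 0 < x) : K0 x ≤ 2 + max 0 (-Real.log x) := by
  set T : ℝ := max 0 (Real.log 2 - Real.log x) with hTdef
  have hT0 : 0 ≤ T := le_max_left _ _
  have hkey : 2 ≤ x * Real.exp T := by
    rcases le_or_gt x 2 with hx2 | hx2
    · have : T = Real.log 2 - Real.log x :=
        max_eq_right (by linarith [Real.log_le_log hx hx2])
      rw [this, Real.exp_sub, Real.exp_log two_pos, Real.exp_log hx]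
      field_simp; exact le_refl _
    · have : T = 0 := max_eq_left (by linarith [Real.log_lt_log two_pos hx2])
      rw [this, Real.exp_zero]; linarith
  have hint := K0_integrableOn hx
  have hi1 : IntegrableOn (fun t => Real.exp (-x * Real.cosh t)) (Set.Ioc 0 T) :=
    hint.mono_set Set.Ioc_subset_Ioi_self
  have hi2 : IntegrableOn (fun t => Real.exp (-x * Real.cosh t)) (Set.Ioi T) :=
    hint.mono_set (Set.Ioi_subset_Ioi hT0)
  have hsplit : K0 x = (∫ t in Set.Ioc 0 T, Real.exp (-x * Real.cosh t))
      + ∫ t in Set.Ioi T, Real.exp (-x * Real.cosh t) := by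
    rw [K0, ← setIntegral_union Set.Ioc_disjoint_Ioi_same measurableSet_Ioi hi1 hi2,
      Set.Ioc_union_Ioi_eq_Ioi hT0]
  have hb1 : (∫ t in Set.Ioc 0 T, Real.exp (-x * Real.cosh t)) ≤ T := by
    have : (∫ t in Set.Ioc 0 T, Real.exp (-x * Real.cosh t))
        ≤ ∫ _ in Set.Ioc 0 T, (1 : ℝ) := by
      apply setIntegral_mono_on hi1 (integrableOn_const (by simp [Real.volume_Ioc]))
        measurableSet_Ioc
      intro t _
      rw [Real.exp_le_one_iff]
      nlinarith [Real.cosh_pos (x := t)]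
    simp [Real.volume_Ioc, ENNReal.toReal_ofReal hT0] at this ⊢
    rcases this with h | h <;> linarith
  have hb2 : (∫ t in Set.Ioi T, Real.exp (-x * Real.cosh t)) ≤ Real.exp (-1 : ℝ) := by
    have hmaj : IntegrableOn (fun t => Real.exp (T - 1) * Real.exp (-t)) (Set.Ioi T) := by
      have := (exp_neg_integrableOn_Ioi T (b := 1) one_pos).const_mul (Real.exp (T - 1))
      simpa [IntegrableOn] using this
    have hle : (∫ t in Set.Ioi T, Real.exp (-x * Real.cosh t))
        ≤ ∫ t in Set.Ioi T, Real.exp (T - 1) * Real.exp (-t) := by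
      apply setIntegral_mono_on hi2 hmaj measurableSet_Ioi
      intro t ht
      have ht' : T < t := mem_Ioi.1 ht
      have e1 : Real.exp T * (1 + (t - T)) ≤ Real.exp t := by
        calc Real.exp T * (1 + (t - T)) ≤ Real.exp T * Real.exp (t - T) := by
              have := Real.add_one_le_exp (t - T)
              have := Real.exp_pos T
              nlinarith
          _ = Real.exp t := by rw [← Real.exp_add]; ring_nf
      have e2 : 1 + (t - T) ≤ x * Real.cosh t := by
        have h3 := half_exp_le_cosh t
        nlinarith [Real.exp_pos T]
      rw [← Real.exp_add]
      exact Real.exp_le_exp.2 (by linarith)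
    have hval : (∫ t in Set.Ioi T, Real.exp (T - 1) * Real.exp (-t)) = Real.exp (-1 : ℝ) := by
      rw [integral_const_mul, integral_exp_neg_Ioi, ← Real.exp_add]; ring_nf
    linarith [hle, hval.le, hval.ge]
  have hTle : T ≤ Real.log 2 + max 0 (-Real.log x) := by
    rcases max_cases 0 (Real.log 2 - Real.log x) with ⟨h1, h2⟩ | ⟨h1, h2⟩ <;>
      rcases max_cases 0 (-Real.log x) with ⟨h3, h4⟩ | ⟨h3, h4⟩ <;>
      simp only [hTdef] <;> linarith [Real.log_pos (by norm_num : (1:ℝ) < 2)]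
  have hlog2 : Real.log 2 ≤ 1 := by linarith [Real.log_le_sub_one_of_pos two_pos]
  have hexp1 : Real.exp (-1 : ℝ) ≤ 1 := Real.exp_le_one_iff.2 (by norm_num)
  linarith [hsplit, hb1, hb2]

lemma exp_le_K0 {x : ℝ} (hx : 0 < x) : Real.exp (-2 * x) ≤ K0 x := by
  have hint := K0_integrableOn hx
  have hi1 : IntegrableOn (fun t => Real.exp (-x * Real.cosh t)) (Set.Ioc 0 1) :=
    hint.mono_set Set.Ioc_subset_Ioi_self
  have hcosh1 : Real.cosh 1 ≤ 2 := by
    rw [Real.cosh_eq]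
    have h1 : Real.exp 1 < 2.7182818286 := Real.exp_one_lt_d9
    have h2 : Real.exp (-1 : ℝ) ≤ 1 := Real.exp_le_one_iff.2 (by norm_num)
    linarith
  have h1 : Real.exp (-2 * x) = ∫ _ in Set.Ioc (0:ℝ) 1, Real.exp (-2 * x) := by
    simp [Real.volume_Ioc]
  rw [h1]
  calc (∫ _ in Set.Ioc (0:ℝ) 1, Real.exp (-2 * x))
      ≤ ∫ t in Set.Ioc (0:ℝ) 1, Real.exp (-x * Real.cosh t) := by
        apply setIntegral_mono_on (integrableOn_const (by simp [Real.volume_Ioc])) hi1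
          measurableSet_Ioc
        intro t ht
        apply Real.exp_le_exp.2
        have : Real.cosh t ≤ Real.cosh 1 :=
          Real.cosh_le_cosh.2 (by rw [abs_of_pos ht.1, abs_one]; exact ht.2)
        nlinarith
    _ ≤ K0 x := by
        apply setIntegral_mono_set hint
        · filter_upwards with t using (Real.exp_pos _).le
        · exact Set.Ioc_subset_Ioi_self.eventuallyLE

lemma log_le_K0 {x : ℝ} (hx0 : 0 < x) (hx1 : x < 1) :
    Real.exp (-1 : ℝ) * (-Real.log x) ≤ K0 x := by
  set T : ℝ := -Real.log x with hT
  have hT0 : 0 < T := by simpa [hT] using neg_pos.2 (Real.log_neg hx0 hx1)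
  have hxT : x * Real.exp T = 1 := by
    rw [hT, Real.exp_neg, Real.exp_log hx0]
    field_simp
  have hint := K0_integrableOn hx0
  have hi1 : IntegrableOn (fun t => Real.exp (-x * Real.cosh t)) (Set.Ioc 0 T) :=
    hint.mono_set Set.Ioc_subset_Ioi_self
  have h1 : Real.exp (-1 : ℝ) * T = ∫ _ in Set.Ioc (0:ℝ) T, Real.exp (-1 : ℝ) := by
    simp [Real.volume_Ioc, ENNReal.toReal_ofReal hT0.le, mul_comm, hT0.le]
  rw [show Real.exp (-1:ℝ) * -Real.log x = Real.exp (-1:ℝ) * T by rw [hT], h1]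
  calc (∫ _ in Set.Ioc (0:ℝ) T, Real.exp (-1 : ℝ))
      ≤ ∫ t in Set.Ioc (0:ℝ) T, Real.exp (-x * Real.cosh t) := by
        apply setIntegral_mono_on (integrableOn_const (by simp [Real.volume_Ioc])) hi1
          measurableSet_Ioc
        intro t ht
        apply Real.exp_le_exp.2
        have h2 : Real.cosh t ≤ Real.exp t := cosh_le_exp_of_nonneg ht.1.le
        have h3 : Real.exp t ≤ Real.exp T := Real.exp_le_exp.2 ht.2
        nlinarith
    _ ≤ K0 x := by
        apply setIntegral_mono_set hint
        · filter_upwards with t using (Real.exp_pos _).le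
        · exact Set.Ioc_subset_Ioi_self.eventuallyLE

lemma K0_lower {B : ℝ} (hB : 1 ≤ B) {s : ℝ} (hs0 : 0 < s) (hsB : s ≤ B) :
    Real.exp (-(2 * B + 1)) / 3 * (1 + max 0 (-Real.log s)) ≤ K0 s := by
  set c : ℝ := Real.exp (-(2 * B + 1)) / 3 with hc
  have hc0 : 0 < c := by positivity
  have hlog2 : (1:ℝ)/2 ≤ Real.log 2 := by
    linarith [Real.log_two_gt_d9]
  rcases le_or_gt (1/2 : ℝ) s with h | h
  · -- s ≥ 1/2: use exp lower bound
    have hm : max 0 (-Real.log s) ≤ Real.log 2 := by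
      apply max_le (by linarith)
      have : Real.log (1/2) ≤ Real.log s := Real.log_le_log (by norm_num) h
      rw [Real.log_div one_ne_zero two_ne_zero, Real.log_one] at this
      linarith
    have hlog2' : Real.log 2 ≤ 1 := by linarith [Real.log_le_sub_one_of_pos two_pos]
    have h1 : Real.exp (-(2 * B + 1)) ≤ Real.exp (-2 * s) :=
      Real.exp_le_exp.2 (by linarith)
    have h2 := exp_le_K0 hs0
    have h3 : c * (1 + max 0 (-Real.log s)) ≤ c * 2 := by
      apply mul_le_mul_of_nonneg_left _ hc0.le
      linarith
    have : c * 2 ≤ Real.exp (-(2 * B + 1)) := by rw [hc]; linarith [Real.exp_pos (-(2*B+1))]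
    linarith
  · -- s < 1/2: use log lower bound
    have hs1 : s < 1 := by linarith
    have hls : Real.log 2 ≤ -Real.log s := by
      have : Real.log s ≤ Real.log (1/2) := Real.log_le_log hs0 h.le
      rw [Real.log_div one_ne_zero two_ne_zero, Real.log_one] at this
      linarith
    have hm : max 0 (-Real.log s) = -Real.log s := max_eq_right (by linarith)
    rw [hm]
    have h1 : c * (1 + -Real.log s) ≤ 3 * c * (-Real.log s) := by
      nlinarith
    have h2 : 3 * c = Real.exp (-(2 * B + 1)) := by rw [hc]; ring
    have h3 : Real.exp (-(2 * B + 1)) ≤ Real.exp (-1 : ℝ) :=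
      Real.exp_le_exp.2 (by linarith)
    have h4 := log_le_K0 hs0 hs1
    nlinarith [Real.exp_pos (-(2*B+1))]

lemma log_key {r : ℝ} (hr : 0 < r) :
    Real.log (1 + r ^ 2) / 2 ≤ 1 + |Real.log r| + Real.log r := by
  have hlog2 : Real.log 2 ≤ 1 := by linarith [Real.log_le_sub_one_of_pos two_pos]
  rcases le_or_gt 1 r with h | h
  · rw [abs_of_nonneg (Real.log_nonneg h)]
    have h1 : (1:ℝ) + r ^ 2 ≤ 2 * r ^ 2 := by nlinarith
    have h2 : Real.log (1 + r ^ 2) ≤ Real.log (2 * r ^ 2) :=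
      Real.log_le_log (by positivity) h1
    rw [Real.log_mul two_ne_zero (by positivity), Real.log_pow] at h2
    have h3 : 0 ≤ Real.log r := Real.log_nonneg h
    push_cast at h2
    nlinarith
  · rw [abs_of_neg (Real.log_neg hr h)]
    have h1 : (1:ℝ) + r ^ 2 ≤ 2 := by nlinarith
    have h2 : Real.log (1 + r ^ 2) ≤ Real.log 2 :=
      Real.log_le_log (by positivity) h1
    linarith

theorem K0_squared_domination (M β : ℝ) (hM : 0 < M) (hβ : 0 < β) :
    ∃ C : ℝ, 0 < C ∧ ∀ ε : ℝ, 0 < ε → ε < 1 / (8 * β) →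
      ∀ r : ℝ, 0 < r → Real.sqrt ε * r ≤ M →
        K0 (Real.sqrt (2 * β * ε) * r) ^ 2
          ≤ C * (1 + |Real.log r|) ^ 2 * K0 (Real.sqrt (2 * β * ε * (1 + r ^ 2))) ^ 2 := by
  set B : ℝ := 1 + Real.sqrt (2 * β) * M with hBdef
  have hB1 : 1 ≤ B := by
    have : 0 ≤ Real.sqrt (2 * β) * M := by positivity
    linarith
  set c : ℝ := Real.exp (-(2 * B + 1)) / 3 with hcdef
  have hc0 : 0 < c := by positivity
  refine ⟨(3 / c) ^ 2, by positivity, ?_⟩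
  intro ε hε hε' r hr hrM
  set a2 : ℝ := 2 * β * ε with ha2def
  have ha2 : 0 < a2 := by positivity
  set s : ℝ := Real.sqrt (a2 * (1 + r ^ 2)) with hsdef
  have hs0 : 0 < s := Real.sqrt_pos.2 (by positivity)
  have har : 0 < Real.sqrt a2 * r := by positivity
  -- s ≤ B
  have hsB : s ≤ B := by
    have h1 : a2 < 1 / 4 := by
      rw [ha2def]
      rw [lt_div_iff₀ (by positivity)] at hε'
      nlinarith
    have h2 : ε * r ^ 2 ≤ M ^ 2 := by
      have h3 : (Real.sqrt ε * r) ^ 2 ≤ M ^ 2 := by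
        apply sq_le_sq' _ hrM
        nlinarith [har, Real.sqrt_nonneg ε, hr]
      rwa [mul_pow, Real.sq_sqrt hε.le] at h3
    have h4 : a2 * (1 + r ^ 2) ≤ B ^ 2 := by
      have h5 : Real.sqrt (2 * β) ^ 2 = 2 * β := Real.sq_sqrt (by positivity)
      have h6 : 0 ≤ Real.sqrt (2 * β) * M := by positivity
      rw [hBdef]
      nlinarith
    calc s ≤ Real.sqrt (B ^ 2) := Real.sqrt_le_sqrt h4
      _ = B := Real.sqrt_sq (by linarith)
  -- log identity
  have hlog_ar : Real.log (Real.sqrt a2 * r) = Real.log a2 / 2 + Real.log r := by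
    rw [Real.log_mul (by positivity) hr.ne', Real.log_sqrt ha2.le]
  have hlog_s : Real.log s = Real.log a2 / 2 + Real.log (1 + r ^ 2) / 2 := by
    rw [hsdef, Real.log_sqrt (by positivity), Real.log_mul ha2.ne' (by positivity)]
    ring
  have hkey : -Real.log (Real.sqrt a2 * r) ≤ -Real.log s + (1 + |Real.log r|) := by
    have := log_key hr
    rw [hlog_ar, hlog_s]
    linarith
  have hmax : max 0 (-Real.log (Real.sqrt a2 * r))
      ≤ max 0 (-Real.log s) + (1 + |Real.log r|) := by
    apply max_le
    · have := le_max_left (0:ℝ) (-Real.log s)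
      have := abs_nonneg (Real.log r)
      linarith
    · have := le_max_right (0:ℝ) (-Real.log s)
      linarith
  set Q : ℝ := 1 + max 0 (-Real.log s) with hQdef
  set L : ℝ := 1 + |Real.log r| with hLdef
  have hQ1 : 1 ≤ Q := by
    have := le_max_left (0:ℝ) (-Real.log s); rw [hQdef]; linarith
  have hL1 : 1 ≤ L := by
    have := abs_nonneg (Real.log r); rw [hLdef]; linarith
  have hupper : K0 (Real.sqrt a2 * r) ≤ 3 * Q * L := by
    have h1 := K0_le har
    have h2 : K0 (Real.sqrt a2 * r) ≤ 2 + max 0 (-Real.log s) + (1 + |Real.log r|) := by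
      linarith
    nlinarith
  have hlower : c * Q ≤ K0 s := K0_lower hB1 hs0 hsB
  have hfinal : K0 (Real.sqrt a2 * r) ≤ (3 / c) * L * K0 s := by
    have h1 : 3 * Q * L = (3 / c) * L * (c * Q) := by field_simp
    have h2 : (3 / c) * L * (c * Q) ≤ (3 / c) * L * K0 s := by
      apply mul_le_mul_of_nonneg_left hlower
      positivity
    calc K0 (Real.sqrt a2 * r) ≤ 3 * Q * L := hupper
      _ = (3 / c) * L * (c * Q) := h1
      _ ≤ (3 / c) * L * K0 s := h2
  have hsq := pow_le_pow_left₀ K0_nonneg hfinal 2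
  calc K0 (Real.sqrt a2 * r) ^ 2 ≤ ((3 / c) * L * K0 s) ^ 2 := hsq
    _ = (3 / c) ^ 2 * L ^ 2 * K0 s ^ 2 := by ring
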